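/- Let D be a finite set of N players, let B be a batch with B ⊆ D, let η ∈ ℝ, let g : B → ℝ^d and g^val ∈ ℝ^d be vectors, and let H be a symmetric d×d real matrix. Define the second-order term utility U_{(2)}(S) := η² (Σ_{z ∈ S} g(z))ᵀ H (Σ_{z ∈ S} g(z)) for S ⊆ B. Then for every z ∈ B, the Shapley value computed over the player set B satisfies φ_z(U_{(2)}) = η² g(z)ᵀ H ( Σ_{z_j ∈ B} g(z_j) ). -/

import Mathlib

open Finset

lemma aux_count {α : Type*} [DecidableEq α] {A : Finset α} {x : α} (hx : x ∈ A) (m : ℕ) :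
    ((A.powersetCard (m+1)).filter (fun S => x ∈ S)).card = (A.card - 1).choose m := by
  rw [← Finset.card_erase_of_mem hx, ← Finset.card_powersetCard m (A.erase x)]
  apply Finset.card_bij' (fun S _ => S.erase x) (fun T _ => insert x T)
  · intro S hS
    simp only [mem_filter] at hS
    exact Finset.insert_erase hS.2
  · intro T hT
    simp only [mem_powersetCard] at hT
    have hxT : x ∉ T := fun h => (Finset.mem_erase.1 (hT.1 h)).1 rfl
    exact Finset.erase_insert hxT
  · intro S hS
    simp only [mem_filter, mem_powersetCard] at hS
    simp only [mem_powersetCard]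
    refine ⟨fun y hy => ?_, ?_⟩
    · rcases Finset.mem_erase.1 hy with ⟨hne, hyS⟩
      exact Finset.mem_erase.2 ⟨hne, hS.1.1 hyS⟩
    · rw [Finset.card_erase_of_mem hS.2, hS.1.2]; rfl
  · intro T hT
    simp only [mem_powersetCard] at hT
    simp only [mem_filter, mem_powersetCard]
    have hxT : x ∉ T := fun h => (Finset.mem_erase.1 (hT.1 h)).1 rfl
    refine ⟨⟨fun y hy => ?_, ?_⟩, Finset.mem_insert_self _ _⟩
    · rcases Finset.mem_insert.1 hy with rfl | hyT
      · exact hx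
      · exact Finset.mem_of_mem_erase (hT.1 hyT)
    · rw [Finset.card_insert_of_notMem hxT, hT.2]

lemma aux_sum {α : Type*} [DecidableEq α] (A : Finset α) (m : ℕ) (f : α → ℝ) :
    ∑ S ∈ A.powersetCard (m+1), ∑ x ∈ S, f x = ((A.card - 1).choose m : ℝ) * ∑ x ∈ A, f x := by
  have h1 : ∀ S ∈ A.powersetCard (m+1), ∑ x ∈ S, f x = ∑ x ∈ A, if x ∈ S then f x else 0 := by
    intro S hS
    rw [Finset.sum_ite_mem, Finset.inter_eq_right.2 (mem_powersetCard.1 hS).1]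
  rw [Finset.sum_congr rfl h1, Finset.sum_comm]
  rw [Finset.mul_sum]
  refine Finset.sum_congr rfl fun x hx => ?_
  rw [← Finset.sum_filter, Finset.sum_const, ← aux_count hx m]
  simp [mul_comm]

lemma reindex_sum (n : ℕ) (G : ℕ → ℝ) :
    ∑ k ∈ Finset.Icc 1 (n+1), G (k-1) = ∑ m ∈ Finset.range (n+1), G m := by
  rw [← Finset.Ico_add_one_right_eq_Icc, Finset.sum_Ico_eq_sum_range]
  simp

lemma gauss_real (n : ℕ) : (∑ i ∈ Finset.range (n+1), (i:ℝ)) = n*(n+1)/2 := by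
  have h2 : ((∑ i ∈ Finset.range (n+1), i) * 2 : ℕ) = (n+1)*n := by
    rw [Finset.sum_range_id_mul_two]; simp
  have h3 : (((∑ i ∈ Finset.range (n+1), i) * 2 : ℕ) : ℝ) = ((n+1)*n : ℕ) :=
    congrArg (Nat.cast : ℕ → ℝ) h2
  push_cast at h3
  linarith


/-- The Shapley value of player `z` in the game with finite player set `D` and
utility function `U`:
`φ_z(U) = (1/N) Σ_{k=1}^{N} C(N−1, k−1)⁻¹ Σ_{S ⊆ D∖{z}, |S| = k−1} [U(S ∪ {z}) − U(S)]`. -/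
noncomputable def shapley {α : Type*} [DecidableEq α]
    (D : Finset α) (U : Finset α → ℝ) (z : α) : ℝ :=
  ((D.card : ℝ))⁻¹ * ∑ k ∈ Finset.Icc 1 D.card,
    (((D.card - 1).choose (k - 1) : ℝ))⁻¹ *
      ∑ S ∈ (D \ {z}).powersetCard (k - 1), (U (S ∪ {z}) - U S)

/-- **Shapley value of the second-order Taylor term** (key lemma of Appendix C).
For the utility `U_{(2)}(S) = η² (Σ_{x ∈ S} g(x))ᵀ H (Σ_{x ∈ S} g(x))` on subsets of the
batch `B`, with `H` symmetric, the Shapley value over the player set `B` of any `z ∈ B`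
is `η² g(z)ᵀ H (Σ_{x ∈ B} g(x))`. -/
theorem shapley_secondOrder_term {α : Type*} [DecidableEq α]
    (D B : Finset α) (hBD : B ⊆ D) (η : ℝ) (d : ℕ)
    (g : α → Fin d → ℝ) (gval : Fin d → ℝ)
    (H : Matrix (Fin d) (Fin d) ℝ) (hH : H.IsSymm)
    (z : α) (hz : z ∈ B) :
    shapley B
      (fun S => η ^ 2 *
        ∑ j, ∑ k, (∑ x ∈ S, g x j) * H j k * (∑ x ∈ S, g x k)) z
    = η ^ 2 * ∑ j, ∑ k, g z j * H j k * (∑ x ∈ B, g x k) := by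
  classical
  set A : Finset α := B \ {z} with hA
  have hzA : z ∉ A := by simp [hA]
  have hBA : B = insert z A := by
    rw [hA, Finset.sdiff_singleton_eq_erase, Finset.insert_erase hz]
  obtain ⟨n, hn⟩ : ∃ n, B.card = n + 1 :=
    ⟨B.card - 1, (Nat.succ_pred_eq_of_pos (Finset.card_pos.2 ⟨z, hz⟩)).symm⟩
  have hAn : A.card = n := by
    have : B.card = A.card + 1 := by rw [hBA, Finset.card_insert_of_notMem hzA]
    omega
  set c0 : ℝ := ∑ j, ∑ k, g z j * H j k * g z k with hc0
  set L : ℝ := ∑ j, ∑ k, g z j * H j k * (∑ x ∈ A, g x k) with hL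
  -- RHS equals η² (c0 + L)
  have hRHS : (η ^ 2 * ∑ j, ∑ k, g z j * H j k * (∑ x ∈ B, g x k)) = η ^ 2 * (c0 + L) := by
    rw [hBA]
    have : ∀ j k : Fin d, g z j * H j k * (∑ x ∈ insert z A, g x k)
        = g z j * H j k * g z k + g z j * H j k * (∑ x ∈ A, g x k) := by
      intro j k; rw [Finset.sum_insert hzA]; ring
    simp_rw [this, Finset.sum_add_distrib]
    rfl
  rw [hRHS]
  -- symmetry of the bilinear form
  have hsymm : ∀ s : Fin d → ℝ,
      (∑ j, ∑ k, s j * H j k * g z k) = ∑ j, ∑ k, g z j * H j k * s k := by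
    intro s
    rw [Finset.sum_comm]
    refine Finset.sum_congr rfl fun j _ => Finset.sum_congr rfl fun k _ => ?_
    rw [hH.apply]; ring
  -- marginal contribution
  have hdiff : ∀ S : Finset α, S ⊆ A →
      (η ^ 2 * ∑ j, ∑ k, (∑ x ∈ S ∪ {z}, g x j) * H j k * (∑ x ∈ S ∪ {z}, g x k))
      - (η ^ 2 * ∑ j, ∑ k, (∑ x ∈ S, g x j) * H j k * (∑ x ∈ S, g x k))
      = η ^ 2 * (c0 + 2 * ∑ j, ∑ k, g z j * H j k * (∑ x ∈ S, g x k)) := by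
    intro S hS
    have hzS : z ∉ S := fun h => hzA (hS h)
    have hins : S ∪ {z} = insert z S := by rw [Finset.union_comm, ← Finset.insert_eq]
    have hsum : ∀ j, (∑ x ∈ S ∪ {z}, g x j) = g z j + ∑ x ∈ S, g x j := by
      intro j; rw [hins, Finset.sum_insert hzS]
    simp_rw [hsum]
    have expand : ∀ j k : Fin d,
        (g z j + ∑ x ∈ S, g x j) * H j k * (g z k + ∑ x ∈ S, g x k)
        = g z j * H j k * g z k + g z j * H j k * (∑ x ∈ S, g x k)
          + (∑ x ∈ S, g x j) * H j k * g z k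
          + (∑ x ∈ S, g x j) * H j k * (∑ x ∈ S, g x k) := by
      intro j k; ring
    simp_rw [expand, Finset.sum_add_distrib]
    rw [hsymm (fun j => ∑ x ∈ S, g x j)]
    ring
  -- unfold shapley
  rw [shapley, hn, ← hA]
  have hchoose1 : (n + 1 - 1 : ℕ) = n := by omega
  rw [hchoose1]
  have hstep : ∀ k ∈ Finset.Icc 1 (n+1),
      ((n.choose (k-1) : ℝ))⁻¹ * ∑ S ∈ A.powersetCard (k-1),
        ((η ^ 2 * ∑ j, ∑ k', (∑ x ∈ S ∪ {z}, g x j) * H j k' * (∑ x ∈ S ∪ {z}, g x k'))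
          - (η ^ 2 * ∑ j, ∑ k', (∑ x ∈ S, g x j) * H j k' * (∑ x ∈ S, g x k')))
      = ((n.choose (k-1) : ℝ))⁻¹ * ∑ S ∈ A.powersetCard (k-1),
          (η ^ 2 * (c0 + 2 * ∑ j, ∑ k', g z j * H j k' * (∑ x ∈ S, g x k'))) := by
    intro k hk
    congr 1
    refine Finset.sum_congr rfl fun S hS => ?_
    exact hdiff S (mem_powersetCard.1 hS).1
  rw [Finset.sum_congr rfl hstep]
  -- value of the inner sum as a function of m = k-1
  have hG : ∀ m, m ≤ n →
      ((n.choose m : ℝ))⁻¹ * ∑ S ∈ A.powersetCard m,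
        (η ^ 2 * (c0 + 2 * ∑ j, ∑ k', g z j * H j k' * (∑ x ∈ S, g x k')))
      = η ^ 2 * c0 + η ^ 2 * 2 * ((m : ℝ)/(n : ℝ)) * L := by
    intro m hm
    have hch : (n.choose m : ℝ) ≠ 0 := by
      exact_mod_cast Nat.choose_pos hm |>.ne'
    have hcardP : (A.powersetCard m).card = n.choose m := by
      rw [Finset.card_powersetCard, hAn]
    -- split the sum
    have hsplit : ∑ S ∈ A.powersetCard m,
        (η ^ 2 * (c0 + 2 * ∑ j, ∑ k', g z j * H j k' * (∑ x ∈ S, g x k')))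
        = (n.choose m : ℝ) * (η ^ 2 * c0)
          + η ^ 2 * 2 * ∑ S ∈ A.powersetCard m, ∑ j, ∑ k', g z j * H j k' * (∑ x ∈ S, g x k') := by
      have : ∀ S : Finset α,
          η ^ 2 * (c0 + 2 * ∑ j, ∑ k', g z j * H j k' * (∑ x ∈ S, g x k'))
          = η ^ 2 * c0 + η ^ 2 * 2 * ∑ j, ∑ k', g z j * H j k' * (∑ x ∈ S, g x k') := by
        intro S; ring
      simp_rw [this, Finset.sum_add_distrib, Finset.sum_const, hcardP, ← Finset.mul_sum]
      push_cast
      ring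
    rw [hsplit]
    -- the bilinear sum over subsets
    have hT : ∑ S ∈ A.powersetCard m, ∑ j, ∑ k', g z j * H j k' * (∑ x ∈ S, g x k')
        = ((m : ℝ)/(n : ℝ)) * (n.choose m : ℝ) * L := by
      rw [Finset.sum_comm]
      have hswap : ∀ j, ∑ S ∈ A.powersetCard m, ∑ k', g z j * H j k' * (∑ x ∈ S, g x k')
          = ∑ k', g z j * H j k' * (∑ S ∈ A.powersetCard m, ∑ x ∈ S, g x k') := by
        intro j
        rw [Finset.sum_comm]
        refine Finset.sum_congr rfl fun k' _ => ?_
        rw [Finset.mul_sum]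
      simp_rw [hswap]
      match m with
      | 0 =>
        simp
      | m' + 1 =>
        have key : ∀ k' : Fin d, ∑ S ∈ A.powersetCard (m'+1), ∑ x ∈ S, g x k'
            = ((n-1).choose m' : ℝ) * ∑ x ∈ A, g x k' := by
          intro k'
          rw [aux_sum A m' (fun x => g x k'), hAn]
        simp_rw [key]
        have hid : (n : ℝ) * ((n-1).choose m' : ℝ) = (n.choose (m'+1) : ℝ) * ((m'+1 : ℕ) : ℝ) := by
          have hn1 : ∃ n', n = n' + 1 := ⟨n - 1, by omega⟩
          obtain ⟨n', rfl⟩ := hn1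
          have := Nat.add_one_mul_choose_eq n' m'
          have h4 : ((n' + 1) * n'.choose m' : ℕ) = ((n'+1).choose (m'+1) * (m'+1) : ℕ) := this
          have h5 := congrArg (Nat.cast : ℕ → ℝ) h4
          push_cast at h5 ⊢
          simpa using h5
        have hnne : (n : ℝ) ≠ 0 := by
          have : 0 < n := by omega
          exact_mod_cast this.ne'
        have hcoef : ((n-1).choose m' : ℝ) = ((m'+1 : ℕ) : ℝ)/(n:ℝ) * (n.choose (m'+1) : ℝ) := by
          field_simp
          push_cast at hid ⊢
          linarith [hid]
        have hpt : ∀ (j k' : Fin d), g z j * H j k' * (((n-1).choose m' : ℝ) * ∑ x ∈ A, g x k')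
            = (((m'+1:ℕ):ℝ)/(n:ℝ) * (n.choose (m'+1) : ℝ)) * (g z j * H j k' * (∑ x ∈ A, g x k')) := by
          intro j k'; rw [hcoef]; ring
        simp_rw [hpt, ← Finset.mul_sum]
        rfl
    rw [hT]
    field_simp
  -- reindex and finish
  have hre : ∑ k ∈ Finset.Icc 1 (n+1),
      ((n.choose (k-1) : ℝ))⁻¹ * ∑ S ∈ A.powersetCard (k-1),
        (η ^ 2 * (c0 + 2 * ∑ j, ∑ k', g z j * H j k' * (∑ x ∈ S, g x k')))
      = ∑ m ∈ Finset.range (n+1),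
      ((n.choose m : ℝ))⁻¹ * ∑ S ∈ A.powersetCard m,
        (η ^ 2 * (c0 + 2 * ∑ j, ∑ k', g z j * H j k' * (∑ x ∈ S, g x k'))) :=
    reindex_sum n (fun m => ((n.choose m : ℝ))⁻¹ * ∑ S ∈ A.powersetCard m,
        (η ^ 2 * (c0 + 2 * ∑ j, ∑ k', g z j * H j k' * (∑ x ∈ S, g x k'))))
  rw [hre]
  have hfin : ∑ m ∈ Finset.range (n+1),
      ((n.choose m : ℝ))⁻¹ * ∑ S ∈ A.powersetCard m,
        (η ^ 2 * (c0 + 2 * ∑ j, ∑ k', g z j * H j k' * (∑ x ∈ S, g x k')))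
      = ∑ m ∈ Finset.range (n+1), (η ^ 2 * c0 + η ^ 2 * 2 * ((m : ℝ)/(n : ℝ)) * L) := by
    refine Finset.sum_congr rfl fun m hm => ?_
    exact hG m (by simpa using Nat.lt_succ_iff.1 (Finset.mem_range.1 hm))
  rw [hfin, Finset.sum_add_distrib, Finset.sum_const, Finset.card_range]
  have hlin : ∑ m ∈ Finset.range (n+1), η ^ 2 * 2 * ((m : ℝ)/(n : ℝ)) * L
      = η ^ 2 * 2 * L / n * (n*(n+1)/2) := by
    have : ∀ m : ℕ, η ^ 2 * 2 * ((m : ℝ)/(n : ℝ)) * L = (η ^ 2 * 2 * L / n) * (m : ℝ) := by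
      intro m; ring
    simp_rw [this, ← Finset.mul_sum, gauss_real]
  rw [hlin]
  rcases Nat.eq_zero_or_pos n with rfl | hnpos
  · have hAe : A = ∅ := Finset.card_eq_zero.1 hAn
    simp [hL, hAe]
    try ring
  · have hnne : (n : ℝ) ≠ 0 := by exact_mod_cast hnpos.ne'
    have hn1 : ((n : ℝ) + 1) ≠ 0 := by positivity
    field_simp
    push_cast [nsmul_eq_mul]
    ring
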